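/- Let ξ be an irrational real number with continued fraction expansion [a₀, a₁, a₂, …] and convergents p_n/q_n. Then the irrationality exponent of ξ satisfies μ(ξ) = limsup_{n→∞} (2 + log a_{n+1} / log q_n). -/

import Mathlib

open Filter

noncomputable section

/-- The `j`-th digit (j ≥ 1) of the base-`b` expansion of the fractional part of `ξ`. -/
def digit (b : ℕ) (ξ : ℝ) (j : ℕ) : ℕ := (⌊Int.fract ξ * (b : ℝ) ^ j⌋ % (b : ℤ)).toNat

/-- The digit sequence `a₁ a₂ a₃ ⋯` of the base-`b` expansion of `ξ` (index `n` gives `a_{n+1}`). -/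
def digitSeq (b : ℕ) (ξ : ℝ) (n : ℕ) : ℕ := digit b ξ (n + 1)

/-- Subword complexity of an infinite word. -/
def wordComplexity {A : Type*} (a : ℕ → A) (n : ℕ) : ℕ :=
  Set.ncard {w : Fin n → A | ∃ j : ℕ, ∀ i : Fin n, w i = a (j + i)}

/-- Subword complexity `p(ξ, b, n)` of the base-`b` expansion of `ξ`. -/
def realComplexity (b : ℕ) (ξ : ℝ) (n : ℕ) : ℕ := wordComplexity (digitSeq b ξ) n

/-- Exponents `ρ` for which `|ξ - p/q| < q^(-ρ)` has infinitely many rational solutions. -/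
def muSet (ξ : ℝ) : Set ℝ :=
  {ρ : ℝ | {r : ℚ | |ξ - (r : ℝ)| < 1 / (r.den : ℝ) ^ ρ}.Infinite}

/-- The irrationality exponent of a real number. -/
def mu (ξ : ℝ) : EReal := sSup ((fun ρ : ℝ => (ρ : EReal)) '' muSet ξ)

/-- Fractional power `V^x` of a finite word. -/
def wordPow {A : Type*} (V : List A) (x : ℝ) : List A :=
  (List.replicate ⌊x⌋₊ V).flatten ++ V.take ⌈(x - (⌊x⌋₊ : ℝ)) * (V.length : ℝ)⌉₊

/-- The prefix of length `n` of an infinite word. -/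
def prefixWord {A : Type*} (a : ℕ → A) (n : ℕ) : List A := (List.range n).map a

/-- `L` is a prefix of the infinite word `a`. -/
def IsPrefixSeq {A : Type*} (a : ℕ → A) (L : List A) : Prop := L = prefixWord a L.length

/-- The set of exponents defining the Diophantine exponent of an infinite word. -/
def dioSet {A : Type*} (a : ℕ → A) : Set ℝ :=
  {ρ : ℝ | ∀ m : ℕ, ∃ (U V : List A) (w : ℝ), V ≠ [] ∧ 0 < w ∧
    m ≤ (U ++ wordPow V w).length ∧ IsPrefixSeq a (U ++ wordPow V w) ∧
    ρ ≤ ((U ++ wordPow V w).length : ℝ) / ((U ++ V).length : ℝ)}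

/-- The Diophantine exponent of an infinite word. -/
def dio {A : Type*} (a : ℕ → A) : EReal := sSup ((fun ρ : ℝ => (ρ : EReal)) '' dioSet a)

/-- The set of exponents defining the initial critical exponent of an infinite word. -/
def iceSet {A : Type*} (a : ℕ → A) : Set ℝ :=
  {ρ : ℝ | 0 < ρ ∧ ∀ m : ℕ, ∃ n : ℕ, m ≤ n ∧ 0 < n ∧
    IsPrefixSeq a (wordPow (prefixWord a n) ρ)}

/-- The initial critical exponent of an infinite word. -/
def ice {A : Type*} (a : ℕ → A) : EReal := sSup ((fun ρ : ℝ => (ρ : EReal)) '' iceSet a)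

/-- An infinite word is eventually periodic. -/
def EventuallyPeriodic {A : Type*} (a : ℕ → A) : Prop :=
  ∃ T : ℕ, 0 < T ∧ ∃ N : ℕ, ∀ n : ℕ, N ≤ n → a (n + T) = a n

/-- A Sturmian word: an infinite binary word of subword complexity `n + 1`. -/
def IsSturmian (s : ℕ → Fin 2) : Prop := ∀ n : ℕ, 1 ≤ n → wordComplexity s n = n + 1

/-- The slope of a binary word: the frequency of the letter `1`. -/
def HasSlope (s : ℕ → Fin 2) (α : ℝ) : Prop :=
  Tendsto (fun n : ℕ => (((prefixWord s n).count 1 : ℕ) : ℝ) / (n : ℝ)) atTop (nhds α)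

/-- The iterated Gauss map orbit: complete quotients of the continued fraction of `ξ`. -/
def cfTail (ξ : ℝ) : ℕ → ℝ
  | 0 => ξ
  | n + 1 => 1 / Int.fract (cfTail ξ n)

/-- The `n`-th partial quotient of the continued fraction expansion of `ξ`. -/
def partialQuotient (ξ : ℝ) (n : ℕ) : ℤ := ⌊cfTail ξ n⌋


lemma irrational_fract {x : ℝ} (h : Irrational x) : Irrational (Int.fract x) := by
  rw [Int.fract]; exact Irrational.sub_intCast h _

lemma irrational_cfTail (ξ : ℝ) (hξ : Irrational ξ) : ∀ n, Irrational (cfTail ξ n) := by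
  intro n; induction n with
  | zero => exact hξ
  | succ n ih => rw [cfTail, one_div]; exact (irrational_fract ih).inv

lemma fract_pos_of_irrational {x : ℝ} (h : Irrational x) : 0 < Int.fract x :=
  lt_of_le_of_ne (Int.fract_nonneg x) (fun e => (irrational_fract h).ne_rat 0 (by exact_mod_cast e.symm))

lemma one_lt_cfTail (ξ : ℝ) (hξ : Irrational ξ) (n : ℕ) : 1 < cfTail ξ (n + 1) := by
  rw [cfTail]
  exact one_lt_one_div (fract_pos_of_irrational (irrational_cfTail ξ hξ n)) (Int.fract_lt_one _)

lemma cfTail_eq (ξ : ℝ) (hξ : Irrational ξ) (n : ℕ) :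
    cfTail ξ n = (partialQuotient ξ n : ℝ) + 1 / cfTail ξ (n + 1) := by
  have h := fract_pos_of_irrational (irrational_cfTail ξ hξ n)
  rw [cfTail, one_div_one_div, partialQuotient, Int.floor_add_fract]

lemma one_le_pq (ξ : ℝ) (hξ : Irrational ξ) (n : ℕ) : 1 ≤ partialQuotient ξ (n + 1) := by
  have := one_lt_cfTail ξ hξ n
  rw [partialQuotient]
  exact Int.le_floor.2 (by exact_mod_cast this.le)

def cfQ (ξ : ℝ) : ℕ → ℤ
  | 0 => 0
  | 1 => 1
  | (n + 2) => partialQuotient ξ (n + 1) * cfQ ξ (n + 1) + cfQ ξ n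

def cfP (ξ : ℝ) : ℕ → ℤ
  | 0 => 1
  | 1 => partialQuotient ξ 0
  | (n + 2) => partialQuotient ξ (n + 1) * cfP ξ (n + 1) + cfP ξ n

lemma cfQ_nonneg_pos (ξ : ℝ) (hξ : Irrational ξ) : ∀ n, 0 ≤ cfQ ξ n ∧ 1 ≤ cfQ ξ (n + 1) := by
  intro n
  induction n using Nat.twoStepInduction with
  | zero => simp [cfQ]
  | one =>
    refine ⟨by simp [cfQ], ?_⟩
    show 1 ≤ partialQuotient ξ 1 * cfQ ξ 1 + cfQ ξ 0
    simp only [cfQ, mul_one, add_zero]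
    exact one_le_pq ξ hξ 0
  | more n ih1 ih2 =>
    obtain ⟨h0, h1⟩ := ih1
    refine ⟨by linarith [ih2.1], ?_⟩
    show 1 ≤ partialQuotient ξ (n + 2) * cfQ ξ (n + 2) + cfQ ξ (n + 1)
    nlinarith [one_le_pq ξ hξ (n+1), ih2.2]

lemma cfQ_pos (ξ : ℝ) (hξ : Irrational ξ) (n : ℕ) : 1 ≤ cfQ ξ (n + 1) :=
  (cfQ_nonneg_pos ξ hξ n).2

lemma cfQ_mono (ξ : ℝ) (hξ : Irrational ξ) (n : ℕ) : cfQ ξ (n + 1) ≤ cfQ ξ (n + 2) := by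
  show cfQ ξ (n+1) ≤ partialQuotient ξ (n + 1) * cfQ ξ (n + 1) + cfQ ξ n
  nlinarith [one_le_pq ξ hξ n, cfQ_pos ξ hξ n, (cfQ_nonneg_pos ξ hξ n).1]

lemma cfQ_strict (ξ : ℝ) (hξ : Irrational ξ) (n : ℕ) : cfQ ξ (n + 2) < cfQ ξ (n + 3) := by
  show cfQ ξ (n+2) < partialQuotient ξ (n + 2) * cfQ ξ (n + 2) + cfQ ξ (n+1)
  nlinarith [one_le_pq ξ hξ (n+1), cfQ_pos ξ hξ (n+1), cfQ_pos ξ hξ n]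

lemma cfTail_pos (ξ : ℝ) (hξ : Irrational ξ) (n : ℕ) : 0 < cfTail ξ (n + 1) :=
  lt_trans one_pos (one_lt_cfTail ξ hξ n)

lemma pq_lt_cfTail (ξ : ℝ) (hξ : Irrational ξ) (n : ℕ) :
    (partialQuotient ξ n : ℝ) < cfTail ξ n :=
  lt_of_le_of_ne (Int.floor_le _) (fun e => (irrational_cfTail ξ hξ n).ne_int _ e.symm)

lemma cfTail_lt_pq_add_one (ξ : ℝ) (n : ℕ) :
    cfTail ξ n < (partialQuotient ξ n : ℝ) + 1 := Int.lt_floor_add_one _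

def cfD (ξ : ℝ) (n : ℕ) : ℝ := cfTail ξ (n + 1) * (cfQ ξ (n + 1) : ℝ) + (cfQ ξ n : ℝ)

lemma cfD_pos (ξ : ℝ) (hξ : Irrational ξ) (n : ℕ) : 0 < cfD ξ n := by
  have h1 := cfTail_pos ξ hξ n
  have h2 : (1:ℝ) ≤ (cfQ ξ (n+1) : ℝ) := by exact_mod_cast cfQ_pos ξ hξ n
  have h3 : (0:ℝ) ≤ (cfQ ξ n : ℝ) := by exact_mod_cast (cfQ_nonneg_pos ξ hξ n).1
  unfold cfD; nlinarith

lemma cf_identity (ξ : ℝ) (hξ : Irrational ξ) (n : ℕ) :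
    ξ * cfD ξ n = cfTail ξ (n + 1) * (cfP ξ (n + 1) : ℝ) + (cfP ξ n : ℝ) := by
  induction n with
  | zero =>
    have h := cfTail_eq ξ hξ 0
    have ht : (0:ℝ) < cfTail ξ 1 := cfTail_pos ξ hξ 0
    simp only [cfD, cfQ, cfP, Int.cast_one, Int.cast_zero, mul_one, add_zero]
    have : cfTail ξ 0 = ξ := rfl
    rw [this] at h
    field_simp at h ⊢
    linear_combination h
  | succ n ih =>
    have key : cfTail ξ (n+1) * cfTail ξ (n+2) = (partialQuotient ξ (n+1) : ℝ) * cfTail ξ (n+2) + 1 := by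
      have h := cfTail_eq ξ hξ (n+1)
      have ht : cfTail ξ (n+2) ≠ 0 := ne_of_gt (cfTail_pos ξ hξ (n+1))
      field_simp at h
      linear_combination h
    have hq2 : (cfQ ξ (n+2) : ℝ) = (partialQuotient ξ (n+1) : ℝ) * (cfQ ξ (n+1):ℝ) + (cfQ ξ n:ℝ) := by
      have : cfQ ξ (n+2) = partialQuotient ξ (n+1) * cfQ ξ (n+1) + cfQ ξ n := rfl
      exact_mod_cast congrArg (Int.cast : ℤ → ℝ) this
    have hp2 : (cfP ξ (n+2) : ℝ) = (partialQuotient ξ (n+1) : ℝ) * (cfP ξ (n+1):ℝ) + (cfP ξ n:ℝ) := by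
      have : cfP ξ (n+2) = partialQuotient ξ (n+1) * cfP ξ (n+1) + cfP ξ n := rfl
      exact_mod_cast congrArg (Int.cast : ℤ → ℝ) this
    unfold cfD at ih ⊢
    rw [hq2, hp2]
    linear_combination (cfTail ξ (n+2)) * ih - (ξ * (cfQ ξ (n+1):ℝ) - (cfP ξ (n+1):ℝ)) * key

lemma cf_det (ξ : ℝ) (n : ℕ) :
    cfP ξ (n+1) * cfQ ξ n - cfP ξ n * cfQ ξ (n+1) = (-1 : ℤ)^(n+1) := by
  induction n with
  | zero => simp [cfP, cfQ]
  | succ n ih =>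
    have hq2 : cfQ ξ (n+2) = partialQuotient ξ (n+1) * cfQ ξ (n+1) + cfQ ξ n := rfl
    have hp2 : cfP ξ (n+2) = partialQuotient ξ (n+1) * cfP ξ (n+1) + cfP ξ n := rfl
    rw [hq2, hp2, pow_succ]
    linear_combination (-1 : ℤ) * ih

lemma cf_err (ξ : ℝ) (hξ : Irrational ξ) (n : ℕ) :
    (cfQ ξ (n+1) : ℝ) * ξ - (cfP ξ (n+1) : ℝ) = (-1 : ℝ)^n / cfD ξ n := by
  have hD := cfD_pos ξ hξ n
  have hI := cf_identity ξ hξ n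
  have hdet : (cfP ξ (n+1) : ℝ) * (cfQ ξ n : ℝ) - (cfP ξ n : ℝ) * (cfQ ξ (n+1) : ℝ) = (-1:ℝ)^(n+1) := by
    exact_mod_cast congrArg (Int.cast : ℤ → ℝ) (cf_det ξ n)
  rw [eq_div_iff (ne_of_gt hD)]
  unfold cfD at hI ⊢
  rw [pow_succ] at hdet
  linear_combination (cfQ ξ (n+1):ℝ) * hI - hdet

lemma cfD_bounds (ξ : ℝ) (hξ : Irrational ξ) (n : ℕ) :
    (cfQ ξ (n+2) : ℝ) < cfD ξ n ∧ cfD ξ n < (cfQ ξ (n+2) : ℝ) + (cfQ ξ (n+1) : ℝ) := by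
  have hq2 : (cfQ ξ (n+2) : ℝ) = (partialQuotient ξ (n+1) : ℝ) * (cfQ ξ (n+1):ℝ) + (cfQ ξ n:ℝ) := by
    exact_mod_cast congrArg (Int.cast : ℤ → ℝ) (show cfQ ξ (n+2) = _ from rfl)
  have h1 := pq_lt_cfTail ξ hξ (n+1)
  have h2 := cfTail_lt_pq_add_one ξ (n+1)
  have h3 : (1:ℝ) ≤ (cfQ ξ (n+1) : ℝ) := by exact_mod_cast cfQ_pos ξ hξ n
  constructor <;> (unfold cfD; rw [hq2]; nlinarith)

lemma abs_le_abs_add_of_mul_nonneg (a b : ℝ) (h : 0 ≤ a * b) : |a| ≤ |a + b| :=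
  sq_le_sq.1 (by nlinarith)

/-- error term `e_n = q_{n+1} ξ - p_{n+1}` (with shifted indices). -/
def cfE (ξ : ℝ) (n : ℕ) : ℝ := (cfQ ξ (n + 1) : ℝ) * ξ - (cfP ξ (n + 1) : ℝ)

lemma cfE_eq (ξ : ℝ) (hξ : Irrational ξ) (n : ℕ) : cfE ξ n = (-1 : ℝ)^n / cfD ξ n :=
  cf_err ξ hξ n

lemma abs_cfE (ξ : ℝ) (hξ : Irrational ξ) (n : ℕ) : |cfE ξ n| = 1 / cfD ξ n := by
  rw [cfE_eq ξ hξ n, abs_div, abs_pow, abs_neg, abs_one, one_pow,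
    abs_of_pos (cfD_pos ξ hξ n)]

lemma cfE_mul_neg (ξ : ℝ) (hξ : Irrational ξ) (n : ℕ) : cfE ξ n * cfE ξ (n + 1) < 0 := by
  rw [cfE_eq ξ hξ n, cfE_eq ξ hξ (n+1), pow_succ]
  have h1 := cfD_pos ξ hξ n
  have h2 := cfD_pos ξ hξ (n+1)
  rcases neg_one_pow_eq_or ℝ n with h | h <;> rw [h] <;>
    · rw [div_mul_div_comm]
      apply div_neg_of_neg_of_pos (by nlinarith) (by positivity)

lemma best_approx (ξ : ℝ) (hξ : Irrational ξ) (n : ℕ) (p q' : ℤ)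
    (hq1 : 1 ≤ q') (hq2 : q' < cfQ ξ (n + 2)) :
    |cfE ξ n| ≤ |(q' : ℝ) * ξ - (p : ℝ)| := by
  set e : ℤ := (-1)^(n+1) with he
  have hsq : e * e = 1 := by
    rw [he, ← pow_add]
    exact Even.neg_one_pow ⟨n+1, by ring⟩
  have hdet' : cfP ξ (n+2) * cfQ ξ (n+1) - cfP ξ (n+1) * cfQ ξ (n+2) = -e := by
    have := cf_det ξ (n+1)
    rw [this, he, pow_succ]
    ring
  set x : ℤ := e * (p * cfQ ξ (n+2) - q' * cfP ξ (n+2)) with hxdef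
  set y : ℤ := e * (q' * cfP ξ (n+1) - p * cfQ ξ (n+1)) with hydef
  have hx : x * cfQ ξ (n+1) + y * cfQ ξ (n+2) = q' := by
    rw [hxdef, hydef]
    linear_combination (-(e * q')) * hdet' + q' * hsq
  have hy : x * cfP ξ (n+1) + y * cfP ξ (n+2) = p := by
    rw [hxdef, hydef]
    linear_combination (-(e * p)) * hdet' + p * hsq
  have hkey : (q' : ℝ) * ξ - (p : ℝ) = (x : ℝ) * cfE ξ n + (y : ℝ) * cfE ξ (n+1) := by
    have hxR : ((x : ℝ) * (cfQ ξ (n+1) : ℝ) + (y : ℝ) * (cfQ ξ (n+2) : ℝ)) = (q' : ℝ) := by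
      exact_mod_cast congrArg (Int.cast : ℤ → ℝ) hx
    have hyR : ((x : ℝ) * (cfP ξ (n+1) : ℝ) + (y : ℝ) * (cfP ξ (n+2) : ℝ)) = (p : ℝ) := by
      exact_mod_cast congrArg (Int.cast : ℤ → ℝ) hy
    unfold cfE
    simp only [show n+1+1 = n+2 from rfl]
    linear_combination hyR - ξ * hxR
  have hq1' : (1:ℤ) ≤ cfQ ξ (n+1) := cfQ_pos ξ hξ n
  have hq2' : (1:ℤ) ≤ cfQ ξ (n+2) := cfQ_pos ξ hξ (n+1)
  rcases eq_or_ne y 0 with hy0 | hy0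
  · -- q' = x * q_{n+1}, x ≠ 0
    rw [hy0] at hx
    simp only [zero_mul, add_zero] at hx
    have hx0 : x ≠ 0 := by
      intro h0; rw [h0] at hx; simp at hx; omega
    have hxabs : (1:ℝ) ≤ |(x:ℝ)| := by
      rw [← Int.cast_abs]; exact_mod_cast Int.one_le_abs hx0
    rw [hkey, hy0]
    push_cast
    rw [zero_mul, add_zero, abs_mul]
    nlinarith [abs_nonneg (cfE ξ n)]
  · rcases eq_or_ne x 0 with hx0 | hx0
    · exfalso
      rw [hx0] at hx
      simp only [zero_mul, zero_add] at hx
      have : 1 ≤ y := by nlinarith [Int.one_le_abs hy0, abs_le_abs_add_of_mul_nonneg]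
      nlinarith
    · -- both nonzero, opposite signs
      have hxy : x * y < 0 := by
        rcases lt_or_gt_of_ne hy0 with hy1 | hy1
        · have hx1 : 0 < x := by nlinarith
          exact mul_neg_of_pos_of_neg hx1 hy1
        · have hx1 : x < 0 := by nlinarith
          exact mul_neg_of_neg_of_pos hx1 hy1
      have hsign : 0 ≤ ((x:ℝ) * cfE ξ n) * ((y:ℝ) * cfE ξ (n+1)) := by
        have h1 : ((x:ℝ) * (y:ℝ)) < 0 := by exact_mod_cast hxy
        have h2 := cfE_mul_neg ξ hξ n
        nlinarith
      have hxabs : (1:ℝ) ≤ |(x:ℝ)| := by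
        rw [← Int.cast_abs]; exact_mod_cast Int.one_le_abs hx0
      rw [hkey]
      calc |cfE ξ n| ≤ |(x:ℝ)| * |cfE ξ n| := by nlinarith [abs_nonneg (cfE ξ n)]
        _ = |(x:ℝ) * cfE ξ n| := (abs_mul _ _).symm
        _ ≤ |(x:ℝ) * cfE ξ n + (y:ℝ) * cfE ξ (n+1)| :=
            abs_le_abs_add_of_mul_nonneg _ _ hsign

lemma cf_coprime (ξ : ℝ) (n : ℕ) : IsCoprime (cfP ξ (n+1)) (cfQ ξ (n+1)) := by
  refine ⟨(-1)^(n+1) * cfQ ξ n, -((-1)^(n+1) * cfP ξ n), ?_⟩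
  have h := cf_det ξ n
  have hsq : ((-1:ℤ)^(n+1)) * ((-1:ℤ)^(n+1)) = 1 := by
    rw [← pow_add]; exact Even.neg_one_pow ⟨n+1, by ring⟩
  linear_combination ((-1:ℤ)^(n+1)) * h + hsq

lemma cfQ_toNat (ξ : ℝ) (hξ : Irrational ξ) (n : ℕ) :
    ((cfQ ξ (n+1)).toNat : ℤ) = cfQ ξ (n+1) :=
  Int.toNat_of_nonneg (le_trans zero_le_one (cfQ_pos ξ hξ n))

/-- the `n`-th convergent as a rational number -/
def cfConv (ξ : ℝ) (hξ : Irrational ξ) (n : ℕ) : ℚ :=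
  Rat.mk' (cfP ξ (n+1)) (cfQ ξ (n+1)).toNat
    (by have := cfQ_pos ξ hξ n; omega)
    (by
      have h := cf_coprime ξ n
      rw [Int.isCoprime_iff_gcd_eq_one] at h
      rw [Int.gcd] at h
      have : (cfQ ξ (n+1)).natAbs = (cfQ ξ (n+1)).toNat := by
        have := cfQ_pos ξ hξ n; omega
      rw [← this]
      exact h)

lemma cfConv_den (ξ : ℝ) (hξ : Irrational ξ) (n : ℕ) :
    ((cfConv ξ hξ n).den : ℤ) = cfQ ξ (n+1) := by
  show ((cfQ ξ (n+1)).toNat : ℤ) = _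
  exact cfQ_toNat ξ hξ n

lemma cfConv_cast (ξ : ℝ) (hξ : Irrational ξ) (n : ℕ) :
    ((cfConv ξ hξ n : ℚ) : ℝ) = (cfP ξ (n+1) : ℝ) / (cfQ ξ (n+1) : ℝ) := by
  rw [Rat.cast_def]
  show ((cfP ξ (n+1) : ℝ)) / (((cfQ ξ (n+1)).toNat : ℕ) : ℝ) = _
  congr 1
  exact_mod_cast congrArg (Int.cast : ℤ → ℝ) (cfQ_toNat ξ hξ n)

lemma abs_sub_cfConv (ξ : ℝ) (hξ : Irrational ξ) (n : ℕ) :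
    |ξ - ((cfConv ξ hξ n : ℚ) : ℝ)| = 1 / ((cfQ ξ (n+1) : ℝ) * cfD ξ n) := by
  have hq : (0:ℝ) < (cfQ ξ (n+1) : ℝ) := by exact_mod_cast cfQ_pos ξ hξ n
  rw [cfConv_cast ξ hξ n]
  have : ξ - (cfP ξ (n+1) : ℝ) / (cfQ ξ (n+1) : ℝ) = cfE ξ n / (cfQ ξ (n+1) : ℝ) := by
    unfold cfE; field_simp
  rw [this, abs_div, abs_cfE ξ hξ n, abs_of_pos hq, div_div, mul_comm]

lemma cfQ_succ_ge (ξ : ℝ) (hξ : Irrational ξ) (n : ℕ) : (n : ℤ) + 1 ≤ cfQ ξ (n + 2) := by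
  induction n with
  | zero => simpa using cfQ_pos ξ hξ 1
  | succ n ih =>
    have h2 := cfQ_strict ξ hξ n
    have : cfQ ξ (n+1+2) = cfQ ξ (n+3) := rfl
    rw [this]; push_cast; push_cast at ih; omega

lemma cfQ_mono' (ξ : ℝ) (hξ : Irrational ξ) : ∀ m n : ℕ, 1 ≤ m → m ≤ n → cfQ ξ m ≤ cfQ ξ n := by
  intro m n hm hmn
  induction n with
  | zero => omega
  | succ n ih =>
    rcases Nat.lt_or_ge m (n+1) with h | h
    · have h1 := ih (by omega)
      have h2 : cfQ ξ n ≤ cfQ ξ (n+1) := by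
        rcases n with _ | k
        · omega
        · exact cfQ_mono ξ hξ k
      -- need cfQ (n+1) ≤ cfQ (n+2)? careful: goal cfQ m ≤ cfQ (n+1)
      rcases Nat.lt_or_ge m n with h' | h'
      · exact le_trans (ih (by omega)) h2
      · have : m = n := by omega
        subst this; exact h2
    · have : m = n + 1 := by omega
      subst this; rfl

lemma cfQ_strict' (ξ : ℝ) (hξ : Irrational ξ) : ∀ m n : ℕ, 2 ≤ m → m < n → cfQ ξ m < cfQ ξ n := by
  intro m n hm hmn
  induction n with
  | zero => omega
  | succ n ih =>
    rcases Nat.lt_or_ge m n with h | h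
    · have h1 := ih h
      have h2 : cfQ ξ n ≤ cfQ ξ (n+1) := by
        rcases n with _ | k
        · omega
        · exact cfQ_mono ξ hξ k
      exact lt_of_lt_of_le h1 h2
    · have hnm : n = m := by omega
      obtain ⟨k, hk⟩ : ∃ k, m = k + 2 := ⟨m - 2, by omega⟩
      rw [hnm, hk]
      exact cfQ_strict ξ hξ k

lemma cfQ_ge_index (ξ : ℝ) (hξ : Irrational ξ) (n : ℕ) : (n : ℤ) ≤ cfQ ξ (n + 1) := by
  rcases n with _ | m
  · simp [cfQ]
  · show ((m+1 : ℕ) : ℤ) ≤ cfQ ξ (m + 2)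
    have := cfQ_succ_ge ξ hξ m
    push_cast at this ⊢; omega

/-- locate `q'` between consecutive continuants -/
lemma exists_locate (ξ : ℝ) (hξ : Irrational ξ) (N : ℕ) (q' : ℤ)
    (h1 : cfQ ξ (N + 1) ≤ q') :
    ∃ n : ℕ, N ≤ n ∧ cfQ ξ (n + 1) ≤ q' ∧ q' < cfQ ξ (n + 2) := by
  have hex : ∃ k : ℕ, q' < cfQ ξ (k + 2) := by
    refine ⟨q'.toNat + 1, ?_⟩
    have := cfQ_succ_ge ξ hξ (q'.toNat + 1)
    have h2 : q' ≤ (q'.toNat : ℤ) := Int.self_le_toNat q'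
    push_cast at this; omega
  classical
  let n := Nat.find hex
  have hn2 : q' < cfQ ξ (n + 2) := Nat.find_spec hex
  have hn1 : cfQ ξ (n + 1) ≤ q' := by
    rcases Nat.eq_zero_or_pos n with h0 | h0
    · rw [h0]
      calc cfQ ξ 1 = 1 := rfl
        _ ≤ cfQ ξ (N+1) := cfQ_pos ξ hξ N
        _ ≤ q' := h1
    · obtain ⟨m, hm⟩ : ∃ m, n = m + 1 := ⟨n - 1, by omega⟩
      have h5 := Nat.find_min hex (m := m) (show m < n by omega)
      push_neg at h5
      rw [hm]
      show cfQ ξ (m + 2) ≤ q'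
      exact h5
  refine ⟨n, ?_, hn1, hn2⟩
  by_contra hlt
  push_neg at hlt
  have hle : n + 2 ≤ N + 1 := by omega
  have := cfQ_mono' ξ hξ (n+2) (N+1) (by omega) hle
  omega

lemma finite_bounded_rat (ξ : ℝ) (B : ℕ) :
    {r : ℚ | r.den ≤ B ∧ |ξ - (r : ℝ)| < 1}.Finite := by
  set A : ℤ := ⌊(|ξ| + 1) * (B : ℝ)⌋ with hA
  have hsub : {r : ℚ | r.den ≤ B ∧ |ξ - (r : ℝ)| < 1} ⊆
      (fun r : ℚ => (r.num, r.den)) ⁻¹' (Set.Icc (-(A+1)) A ×ˢ Set.Iic B) := by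
    rintro r ⟨hden, habs⟩
    have hden1 : (1 : ℝ) ≤ (r.den : ℝ) := by exact_mod_cast r.pos
    have hdenB : (r.den : ℝ) ≤ (B : ℝ) := by exact_mod_cast hden
    have hr : |(r : ℝ)| ≤ |ξ| + 1 := by
      have := abs_sub_abs_le_abs_sub (r : ℝ) ξ
      rw [abs_sub_comm (r:ℝ) ξ] at this
      linarith
    have hnum : |(r.num : ℝ)| ≤ (|ξ| + 1) * (B : ℝ) := by
      have h1 : (r.num : ℝ) = (r : ℝ) * (r.den : ℝ) := by
        rw [Rat.cast_def]; field_simp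
      rw [h1, abs_mul, abs_of_nonneg (by positivity : (0:ℝ) ≤ (r.den:ℝ))]
      have : (0:ℝ) ≤ |ξ| + 1 := by positivity
      nlinarith [abs_nonneg (r : ℝ)]
    constructor
    · constructor
      · have hfl : (|ξ|+1) * (B:ℝ) < ((A:ℤ):ℝ) + 1 := Int.lt_floor_add_one _
        have h9 : ((-(A+1) : ℤ) : ℝ) ≤ (r.num : ℝ) := by
          push_cast
          linarith [(abs_le.1 hnum).1]
        exact_mod_cast h9
      · have := (abs_le.1 hnum).2
        exact Int.le_floor.2 (by exact_mod_cast this)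
    · exact hden
  refine Set.Finite.subset (Set.Finite.preimage ?_ ((Set.finite_Icc _ _).prod (Set.finite_Iic _))) hsub
  intro r _ s _ h
  simp only [Prod.mk.injEq] at h
  exact Rat.ext h.1 h.2

lemma rpow_le_of_lt_log (c : ℝ) (a Q : ℝ) (ha : 1 ≤ a) (hQ : 1 ≤ Q)
    (hc : c < 2 + Real.log a / Real.log Q) : Q ^ c ≤ a * Q ^ (2:ℕ) := by
  have hQpos : (0:ℝ) < Q := lt_of_lt_of_le one_pos hQ
  rcases eq_or_lt_of_le hQ with h1 | h1
  · rw [← h1, Real.one_rpow]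
    nlinarith
  · have hlog := Real.log_pos h1
    have h2 : (c - 2) * Real.log Q < Real.log a := by
      have h3 : c - 2 < Real.log a / Real.log Q := by linarith
      exact (lt_div_iff₀ hlog).1 h3
    have h4 : Q ^ (c - 2 : ℝ) ≤ a := by
      rw [Real.rpow_def_of_pos hQpos]
      calc Real.exp (Real.log Q * (c-2)) ≤ Real.exp (Real.log a) :=
            Real.exp_le_exp.2 (by linarith [h2, mul_comm (Real.log Q) (c-2)])
        _ = a := Real.exp_log (by linarith)
    calc Q ^ c = Q ^ (2:ℝ) * Q ^ (c - 2 : ℝ) := by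
          rw [← Real.rpow_add hQpos]; norm_num
      _ ≤ Q ^ (2:ℝ) * a := by
          apply mul_le_mul_of_nonneg_left h4 (Real.rpow_nonneg (le_of_lt hQpos) _)
      _ = a * Q ^ (2:ℕ) := by
          rw [show (2:ℝ) = ((2:ℕ):ℝ) by norm_num, Real.rpow_natCast]; ring

lemma cfConv_mem (ξ : ℝ) (hξ : Irrational ξ) (c : ℝ) (n : ℕ)
    (hc : c < 2 + Real.log ((partialQuotient ξ (n+1) : ℤ) : ℝ) / Real.log ((cfQ ξ (n+1) : ℤ) : ℝ)) :
    |ξ - ((cfConv ξ hξ n : ℚ) : ℝ)| < 1 / ((cfConv ξ hξ n).den : ℝ) ^ c := by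
  set a : ℝ := ((partialQuotient ξ (n+1) : ℤ) : ℝ) with hadef
  set Q : ℝ := ((cfQ ξ (n+1) : ℤ) : ℝ) with hQdef
  have ha : (1:ℝ) ≤ a := by rw [hadef]; exact_mod_cast one_le_pq ξ hξ n
  have hQ : (1:ℝ) ≤ Q := by rw [hQdef]; exact_mod_cast cfQ_pos ξ hξ n
  have hQpos : (0:ℝ) < Q := lt_of_lt_of_le one_pos hQ
  have hden : ((cfConv ξ hξ n).den : ℝ) = Q := by
    rw [hQdef]; exact_mod_cast congrArg (Int.cast : ℤ → ℝ) (cfConv_den ξ hξ n)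
  rw [hden, abs_sub_cfConv ξ hξ n]
  have hD : (cfQ ξ (n+2) : ℝ) < cfD ξ n := (cfD_bounds ξ hξ n).1
  have hq2 : a * Q ≤ (cfQ ξ (n+2) : ℝ) := by
    have h0 : (0:ℤ) ≤ cfQ ξ n := (cfQ_nonneg_pos ξ hξ n).1
    have : partialQuotient ξ (n+1) * cfQ ξ (n+1) ≤ cfQ ξ (n+2) := by
      have : cfQ ξ (n+2) = partialQuotient ξ (n+1) * cfQ ξ (n+1) + cfQ ξ n := rfl
      omega
    rw [hadef, hQdef]
    exact_mod_cast this
  have hkey : Q ^ c ≤ a * Q ^ (2:ℕ) := rpow_le_of_lt_log c a Q ha hQ hc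
  have hlt : a * Q ^ (2:ℕ) < Q * cfD ξ n := by nlinarith
  have h5 : Q ^ c < Q * cfD ξ n := lt_of_le_of_lt hkey hlt
  have h6 : (0:ℝ) < Q ^ c := Real.rpow_pos_of_pos hQpos c
  exact one_div_lt_one_div_of_lt h6 h5

lemma lower_bound_mem (ξ : ℝ) (hξ : Irrational ξ) (c : ℝ)
    (hc : ∀ N : ℕ, ∃ n : ℕ, N ≤ n ∧
      c < 2 + Real.log ((partialQuotient ξ (n+1) : ℤ) : ℝ) / Real.log ((cfQ ξ (n+1) : ℤ) : ℝ)) :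
    c ∈ muSet ξ := by
  set T : Set ℕ := {n | 1 ≤ n ∧
    c < 2 + Real.log ((partialQuotient ξ (n+1) : ℤ) : ℝ) / Real.log ((cfQ ξ (n+1) : ℤ) : ℝ)} with hT
  have hTinf : T.Infinite := by
    rw [← Nat.frequently_atTop_iff_infinite]
    rw [Filter.frequently_atTop]
    intro N
    obtain ⟨n, hn1, hn2⟩ := hc (N + 1)
    exact ⟨n, by omega, ⟨by omega, hn2⟩⟩
  have hinj : Set.InjOn (cfConv ξ hξ) T := by
    intro m hm n hn hmn
    obtain ⟨hm1, -⟩ := hm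
    obtain ⟨hn1, -⟩ := hn
    by_contra hne
    rcases Nat.lt_or_ge m n with h | h
    · have hd := congrArg Rat.den hmn
      have h1 : cfQ ξ (m+1) = cfQ ξ (n+1) := by
        have := congrArg (Nat.cast : ℕ → ℤ) hd
        rwa [cfConv_den ξ hξ m, cfConv_den ξ hξ n] at this
      have := cfQ_strict' ξ hξ (m+1) (n+1) (by omega) (by omega)
      omega
    · rcases Nat.lt_or_ge n m with h' | h'
      · have hd := congrArg Rat.den hmn
        have h1 : cfQ ξ (m+1) = cfQ ξ (n+1) := by
          have := congrArg (Nat.cast : ℕ → ℤ) hd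
          rwa [cfConv_den ξ hξ m, cfConv_den ξ hξ n] at this
        have := cfQ_strict' ξ hξ (n+1) (m+1) (by omega) (by omega)
        omega
      · omega
  have hsub : (cfConv ξ hξ) '' T ⊆
      {r : ℚ | |ξ - (r : ℝ)| < 1 / (r.den : ℝ) ^ c} := by
    rintro r ⟨n, hn, rfl⟩
    exact cfConv_mem ξ hξ c n hn.2
  exact Set.Infinite.mono hsub (Set.Infinite.image hinj hTinf)

lemma cfQ_step (ξ : ℝ) (hξ : Irrational ξ) (n : ℕ) : cfQ ξ n ≤ cfQ ξ (n + 1) := by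
  rcases n with _ | k
  · simp [cfQ]
  · exact cfQ_mono ξ hξ k

lemma exists_big_den (ξ : ℝ) (ρ : ℝ) (hρ : 0 < ρ)
    (hinf : {r : ℚ | |ξ - (r : ℝ)| < 1 / (r.den : ℝ) ^ ρ}.Infinite) (B : ℕ) :
    ∃ r : ℚ, |ξ - (r : ℝ)| < 1 / (r.den : ℝ) ^ ρ ∧ B < r.den := by
  by_contra h
  push_neg at h
  apply hinf
  apply Set.Finite.subset (finite_bounded_rat ξ B)
  intro r hr
  have hden1 : (1:ℝ) ≤ (r.den : ℝ) := by exact_mod_cast r.pos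
  have h1 : (1:ℝ) ≤ (r.den : ℝ) ^ ρ := Real.one_le_rpow hden1 hρ.le
  refine ⟨h r hr, lt_of_lt_of_le hr ?_⟩
  rw [div_le_one (by linarith)]
  exact h1

set_option maxHeartbeats 1000000 in
lemma upper_bound_not_mem (ξ : ℝ) (hξ : Irrational ξ) (ρ c : ℝ) (hρc : c < ρ) (hc2 : 2 < c)
    (N₀ : ℕ)
    (hN₀ : ∀ n : ℕ, N₀ ≤ n →
      2 + Real.log ((partialQuotient ξ (n+1) : ℤ) : ℝ) / Real.log ((cfQ ξ (n+1) : ℤ) : ℝ) < c) :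
    ρ ∉ muSet ξ := by
  intro hinf
  set N₁ : ℕ := ⌈Real.exp (Real.log 4 / (ρ - c))⌉₊ with hN₁def
  set N : ℕ := max (max N₀ N₁) 2 with hNdef
  obtain ⟨r, hr, hden⟩ := exists_big_den ξ ρ (by linarith) hinf (cfQ ξ (N+1)).toNat
  set q' : ℤ := (r.den : ℤ) with hq'def
  have hq'1 : 1 ≤ q' := by have h0 : 1 ≤ r.den := r.pos; rw [hq'def]; exact_mod_cast h0
  have hq'big : cfQ ξ (N+1) ≤ q' := by
    have h1 := cfQ_toNat ξ hξ N
    omega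
  obtain ⟨n, hnN, hn1, hn2⟩ := exists_locate ξ hξ N q' hq'big
  -- basic quantities
  set Q : ℝ := ((cfQ ξ (n+1) : ℤ) : ℝ) with hQdef
  set Q2 : ℝ := ((cfQ ξ (n+2) : ℤ) : ℝ) with hQ2def
  set A : ℝ := ((partialQuotient ξ (n+1) : ℤ) : ℝ) with hAdef
  have hA1 : (1:ℝ) ≤ A := by rw [hAdef]; exact_mod_cast one_le_pq ξ hξ n
  have hq2 : (2:ℤ) ≤ cfQ ξ (n+1) := by
    have := cfQ_ge_index ξ hξ n
    have hn2' : 2 ≤ n := le_trans (le_max_right _ _) hnN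
    omega
  have hQ2R : (2:ℝ) ≤ Q := by rw [hQdef]; exact_mod_cast hq2
  have hQpos : (0:ℝ) < Q := by linarith
  have hlogQ : 0 < Real.log Q := Real.log_pos (by linarith)
  have hQQ2 : Q ≤ Q2 := by
    rw [hQdef, hQ2def]; exact_mod_cast cfQ_step ξ hξ (n+1)
  have hQ2pos : (0:ℝ) < Q2 := lt_of_lt_of_le hQpos hQQ2
  -- Q2 ≤ 2 A Q
  have hQ2le : Q2 ≤ 2 * A * Q := by
    have h1 : cfQ ξ (n+2) = partialQuotient ξ (n+1) * cfQ ξ (n+1) + cfQ ξ n := rfl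
    have h2 : cfQ ξ n ≤ cfQ ξ (n+1) := cfQ_step ξ hξ n
    have h3 : (1:ℤ) ≤ partialQuotient ξ (n+1) := one_le_pq ξ hξ n
    have h4 : (1:ℤ) ≤ cfQ ξ (n+1) := cfQ_pos ξ hξ n
    have : cfQ ξ (n+2) ≤ 2 * partialQuotient ξ (n+1) * cfQ ξ (n+1) := by nlinarith
    rw [hQ2def, hAdef, hQdef]; exact_mod_cast this
  -- log conditions
  have hLa : Real.log A < (c - 2) * Real.log Q := by
    have := hN₀ n (le_trans (le_trans (le_max_left _ _) (le_max_left _ _)) hnN)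
    rw [← hAdef, ← hQdef] at this
    have h5 : Real.log A / Real.log Q < c - 2 := by linarith
    exact (div_lt_iff₀ hlogQ).1 h5
  have hlog4 : Real.log 4 ≤ (ρ - c) * Real.log Q := by
    have hn1' : N₁ ≤ n := le_trans (le_trans (le_max_right _ _) (le_max_left _ _)) hnN
    have hQn : ((n:ℤ) : ℝ) ≤ Q := by rw [hQdef]; exact_mod_cast cfQ_ge_index ξ hξ n
    have hexp : Real.exp (Real.log 4 / (ρ - c)) ≤ Q := by
      calc Real.exp (Real.log 4 / (ρ - c)) ≤ (N₁ : ℝ) := Nat.le_ceil _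
        _ ≤ (n : ℝ) := by exact_mod_cast hn1'
        _ ≤ Q := by exact_mod_cast hQn
    have h6 : Real.log 4 / (ρ - c) ≤ Real.log Q := by
      calc Real.log 4 / (ρ - c) = Real.log (Real.exp (Real.log 4 / (ρ - c))) :=
            (Real.log_exp _).symm
        _ ≤ Real.log Q := Real.log_le_log (Real.exp_pos _) hexp
    have h7 : 0 < ρ - c := by linarith
    calc Real.log 4 = (ρ - c) * (Real.log 4 / (ρ - c)) := by field_simp
      _ ≤ (ρ - c) * Real.log Q := by nlinarith
  -- 2 * Q2 ≤ q' ^ (ρ - 1)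
  have hq'R : Q ≤ (q' : ℝ) := by rw [hQdef]; exact_mod_cast hn1
  have hq'pos : (0:ℝ) < (q' : ℝ) := by linarith
  have hkey : 2 * Q2 ≤ (q' : ℝ) ^ (ρ - 1 : ℝ) := by
    have hlogle : Real.log (2 * Q2) ≤ (ρ - 1) * Real.log Q := by
      have h8 : Real.log (2 * Q2) ≤ Real.log (4 * A * Q) := by
        apply Real.log_le_log (by linarith)
        nlinarith
      have h9 : Real.log (4 * A * Q) = Real.log 4 + Real.log A + Real.log Q := by
        rw [Real.log_mul (by positivity) (by positivity), Real.log_mul (by norm_num) (by positivity)]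
      rw [h9] at h8
      nlinarith
    calc 2 * Q2 = Real.exp (Real.log (2 * Q2)) := (Real.exp_log (by linarith)).symm
      _ ≤ Real.exp ((ρ-1) * Real.log Q) := Real.exp_le_exp.2 hlogle
      _ = Q ^ (ρ - 1 : ℝ) := by rw [Real.rpow_def_of_pos hQpos, mul_comm]
      _ ≤ (q' : ℝ) ^ (ρ - 1 : ℝ) := Real.rpow_le_rpow hQpos.le hq'R (by linarith)
  -- lower bound for |ξ - r|
  have hba := best_approx ξ hξ n r.num q' hq'1 hn2
  have hcast : (r : ℝ) = (r.num : ℝ) / (q' : ℝ) := by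
    rw [Rat.cast_def]; rfl
  have habs : |ξ - (r : ℝ)| = |(q' : ℝ) * ξ - (r.num : ℝ)| / (q' : ℝ) := by
    have e2 : ξ - (r.num:ℝ)/(q':ℝ) = ((q':ℝ)*ξ - (r.num:ℝ))/(q':ℝ) := by field_simp
    rw [hcast, e2, abs_div, abs_of_pos hq'pos]
  have hE : |cfE ξ n| = 1 / cfD ξ n := abs_cfE ξ hξ n
  have hDpos := cfD_pos ξ hξ n
  have hD2 : cfD ξ n < 2 * Q2 := by
    have := (cfD_bounds ξ hξ n).2
    rw [← hQ2def, ← hQdef] at this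
    linarith
  have hlow : 1 / (2 * Q2 * (q' : ℝ)) < |ξ - (r : ℝ)| := by
    rw [habs]
    have h10 : 1 / cfD ξ n ≤ |(q' : ℝ) * ξ - (r.num : ℝ)| := by rw [← hE]; exact hba
    have h11 : 1 / (2 * Q2) < 1 / cfD ξ n := one_div_lt_one_div_of_lt hDpos hD2
    have e0 : 1 / (2 * Q2 * (q' : ℝ)) = (1 / (2 * Q2)) / (q' : ℝ) := by ring
    rw [e0]
    calc (1 / (2 * Q2)) / (q' : ℝ) < (1 / cfD ξ n) / (q' : ℝ) := by gcongr
      _ ≤ |(q' : ℝ) * ξ - (r.num : ℝ)| / (q' : ℝ) := by gcongr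
  -- conclude contradiction
  have hrden : ((r.den : ℕ) : ℝ) = (q' : ℝ) := by rw [hq'def]; push_cast; rfl
  have hrpow : 2 * Q2 * (q' : ℝ) ≤ (q' : ℝ) ^ (ρ : ℝ) := by
    have e3 : (q' : ℝ) ^ (ρ : ℝ) = (q' : ℝ) ^ (ρ - 1 : ℝ) * (q' : ℝ) ^ (1:ℝ) := by
      rw [← Real.rpow_add hq'pos]; norm_num
    rw [Real.rpow_one] at e3
    rw [e3]
    have h12 : (0:ℝ) ≤ (q' : ℝ) := hq'pos.le
    nlinarith [hkey]
  have hfinal : 1 / ((r.den : ℕ) : ℝ) ^ (ρ : ℝ) ≤ 1 / (2 * Q2 * (q' : ℝ)) := by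
    rw [hrden]
    apply one_div_le_one_div_of_le (by positivity) hrpow
  linarith [hr]


/-- For an irrational `ξ` -/
theorem mu_eq_limsup_of_continued_fraction (ξ : ℝ) (hξ : Irrational ξ)
    (q : ℕ → ℤ) (hq0 : q 0 = 1) (hq1 : q 1 = partialQuotient ξ 1)
    (hqrec : ∀ n : ℕ, q (n + 2) = partialQuotient ξ (n + 2) * q (n + 1) + q n) :
    mu ξ = Filter.limsup (fun n : ℕ =>
      (((2 : ℝ) + Real.log ((partialQuotient ξ (n + 1) : ℤ) : ℝ) /
        Real.log ((q n : ℤ) : ℝ) : ℝ) : EReal)) Filter.atTop := by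
  have hq : ∀ n, q n = cfQ ξ (n + 1) := by
    intro n
    induction n using Nat.twoStepInduction with
    | zero => rw [hq0]; rfl
    | one => rw [hq1]; show _ = partialQuotient ξ 1 * cfQ ξ 1 + cfQ ξ 0; simp [cfQ]
    | more n ih1 ih2 =>
      rw [hqrec n, ih1, ih2]
      rfl
  set L : ℕ → EReal := fun n =>
    (((2 : ℝ) + Real.log ((partialQuotient ξ (n + 1) : ℤ) : ℝ) /
      Real.log ((cfQ ξ (n + 1) : ℤ) : ℝ) : ℝ) : EReal) with hLdef
  have hfun : (fun n : ℕ =>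
      (((2 : ℝ) + Real.log ((partialQuotient ξ (n + 1) : ℤ) : ℝ) /
        Real.log ((q n : ℤ) : ℝ) : ℝ) : EReal)) = L := by
    funext n
    rw [hLdef, hq n]
  rw [hfun]
  have hL2 : ∀ n, ((2:ℝ) : EReal) ≤ L n := by
    intro n
    rw [hLdef]
    apply EReal.coe_le_coe_iff.2
    have h1 : (0:ℝ) ≤ Real.log ((partialQuotient ξ (n + 1) : ℤ) : ℝ) :=
      Real.log_nonneg (by exact_mod_cast one_le_pq ξ hξ n)
    have h2 : (0:ℝ) ≤ Real.log ((cfQ ξ (n + 1) : ℤ) : ℝ) :=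
      Real.log_nonneg (by exact_mod_cast cfQ_pos ξ hξ n)
    have := div_nonneg h1 h2
    linarith
  have hlim2 : ((2:ℝ) : EReal) ≤ Filter.limsup L Filter.atTop :=
    Filter.le_limsup_of_frequently_le (Filter.Frequently.of_forall hL2)
  apply le_antisymm
  · -- mu ≤ limsup
    apply sSup_le
    rintro x ⟨ρ, hρ, rfl⟩
    by_contra hcon
    push_neg at hcon
    obtain ⟨c, hc1, hc2⟩ := EReal.exists_between_coe_real hcon
    have hc2' : c < ρ := EReal.coe_lt_coe_iff.1 hc2
    have hc2R : (2:ℝ) < c := EReal.coe_lt_coe_iff.1 (lt_of_le_of_lt hlim2 hc1)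
    have hev := Filter.eventually_lt_of_limsup_lt hc1
    rw [Filter.eventually_atTop] at hev
    obtain ⟨N₀, hN₀⟩ := hev
    refine upper_bound_not_mem ξ hξ ρ c hc2' hc2R N₀ ?_ hρ
    intro n hn
    have := hN₀ n hn
    rw [hLdef] at this
    exact EReal.coe_lt_coe_iff.1 this
  · -- limsup ≤ mu
    by_contra hcon
    push_neg at hcon
    obtain ⟨c, hc1, hc2⟩ := EReal.exists_between_coe_real hcon
    have hmem : c ∈ muSet ξ := by
      apply lower_bound_mem ξ hξ c
      intro N
      have hfreq := Filter.frequently_lt_of_lt_limsup (by isBoundedDefault) hc2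
      rw [Filter.frequently_atTop] at hfreq
      obtain ⟨n, hn1, hn2⟩ := hfreq N
      rw [hLdef] at hn2
      exact ⟨n, hn1, EReal.coe_lt_coe_iff.1 hn2⟩
    have : ((c:ℝ) : EReal) ≤ mu ξ := le_sSup ⟨c, hmem, rfl⟩
    exact absurd (lt_of_le_of_lt this hc1) (lt_irrefl _)

end
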